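/- Let {(A_i, B_i)}_{i=1}^∞ be an i.i.d. sequence of pairs of positive bounded random variables with B bounded away from 0, and suppose cov(A, B)/var(B) ≤ E[A]/E[B] with strict inequality. Then, writing Z_M = (Σ_{i=1}^M A_i)/(Σ_{i=1}^M B_i), the second-order term of the expansion of E[Z_M] in powers of 1/M is nonnegative: E[Z_M] = E[A]/E[B] + M^{-1}·E[B]^{-2}·( (E[A]/E[B])·var(B) − cov(A, B) ) + O(M^{-2}), and the coefficient (E[A]/E[B])·var(B) − cov(A, B) ≥ 0. -/

import Mathlib

open MeasureTheory Filter

open MeasureTheory Filter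

namespace RatioAux
set_option linter.unusedSectionVars false

variable {Ω : Type*} [MeasureSpace Ω] [IsProbabilityMeasure (volume : Measure Ω)]

def Bdd (f : Ω → ℝ) : Prop := Measurable f ∧ ∃ C : ℝ, ∀ ω, |f ω| ≤ C

lemma Bdd.meas {f : Ω → ℝ} (h : Bdd f) : Measurable f := h.1

lemma Bdd.integrable {f : Ω → ℝ} (h : Bdd f) : Integrable f (volume : Measure Ω) := by
  obtain ⟨hm, C, hC⟩ := h
  exact ⟨hm.aestronglyMeasurable, HasFiniteIntegral.of_bounded (ae_of_all _ hC)⟩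

lemma Bdd.const (c : ℝ) : Bdd (fun _ : Ω => c) :=
  ⟨measurable_const, ⟨|c|, fun _ => le_refl _⟩⟩

lemma Bdd.add {f g : Ω → ℝ} (hf : Bdd f) (hg : Bdd g) : Bdd (fun ω => f ω + g ω) := by
  obtain ⟨hfm, C, hC⟩ := hf; obtain ⟨hgm, D, hD⟩ := hg
  exact ⟨hfm.add hgm, ⟨C + D, fun ω => (abs_add_le _ _).trans (add_le_add (hC ω) (hD ω))⟩⟩

lemma Bdd.neg {f : Ω → ℝ} (hf : Bdd f) : Bdd (fun ω => -f ω) := by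
  obtain ⟨hfm, C, hC⟩ := hf
  exact ⟨hfm.neg, ⟨C, fun ω => by simpa using hC ω⟩⟩

lemma Bdd.sub {f g : Ω → ℝ} (hf : Bdd f) (hg : Bdd g) : Bdd (fun ω => f ω - g ω) := by
  simpa [sub_eq_add_neg] using hf.add hg.neg

lemma Bdd.mul {f g : Ω → ℝ} (hf : Bdd f) (hg : Bdd g) : Bdd (fun ω => f ω * g ω) := by
  obtain ⟨hfm, C, hC⟩ := hf; obtain ⟨hgm, D, hD⟩ := hg
  refine ⟨hfm.mul hgm, ⟨C * D, fun ω => ?_⟩⟩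
  rw [abs_mul]
  exact mul_le_mul (hC ω) (hD ω) (abs_nonneg _) ((abs_nonneg _).trans (hC ω))

lemma Bdd.pow {f : Ω → ℝ} (hf : Bdd f) (n : ℕ) : Bdd (fun ω => f ω ^ n) := by
  induction n with
  | zero => simpa using Bdd.const (Ω := Ω) 1
  | succ n ih => simpa [pow_succ] using ih.mul hf

lemma Bdd.smul {f : Ω → ℝ} (c : ℝ) (hf : Bdd f) : Bdd (fun ω => c * f ω) :=
  (Bdd.const c).mul hf

lemma Bdd.sum {ι : Type*} (s : Finset ι) (f : ι → Ω → ℝ) (hf : ∀ i ∈ s, Bdd (f i)) :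
    Bdd (fun ω => ∑ i ∈ s, f i ω) := by
  classical
  induction s using Finset.induction_on with
  | empty => simpa using Bdd.const (Ω := Ω) 0
  | insert a s hx ih =>
    simp only [Finset.sum_insert hx]
    exact (hf a (Finset.mem_insert_self _ _)).add
      (ih fun i hi => hf i (Finset.mem_insert_of_mem hi))

/-- centered variable -/
def ctr (X : ℕ → Ω → ℝ) (μ : ℝ) (i : ℕ) (ω : Ω) : ℝ := X i ω - μ

/-- centered partial sum -/
def csum (X : ℕ → Ω → ℝ) (μ : ℝ) (M : ℕ) (ω : Ω) : ℝ := ∑ i ∈ Finset.range M, ctr X μ i ω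

lemma csum_succ (X : ℕ → Ω → ℝ) (μ : ℝ) (M : ℕ) (ω : Ω) :
    csum X μ (M + 1) ω = csum X μ M ω + ctr X μ M ω := by
  simp [csum, Finset.sum_range_succ]

lemma csum_eq (X : ℕ → Ω → ℝ) (μ : ℝ) (M : ℕ) (ω : Ω) :
    csum X μ M ω = (∑ i ∈ Finset.range M, X i ω) - M * μ := by
  simp [csum, ctr, Finset.sum_sub_distrib, mul_comm]

lemma Bdd.ctr {X : ℕ → Ω → ℝ} {μ : ℝ} (h : ∀ i, Bdd (X i)) (i : ℕ) :
    Bdd (RatioAux.ctr X μ i) := (h i).sub (Bdd.const μ)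

lemma Bdd.csum {X : ℕ → Ω → ℝ} {μ : ℝ} (h : ∀ i, Bdd (X i)) (M : ℕ) :
    Bdd (RatioAux.csum X μ M) :=
  Bdd.sum _ _ (fun i _ => Bdd.ctr h i)

end RatioAux
namespace RatioAux
set_option linter.unusedSectionVars false
set_option maxHeartbeats 1000000

variable {Ω : Type*} [MeasureSpace Ω] [IsProbabilityMeasure (volume : Measure Ω)]
variable (A B : ℕ → Ω → ℝ)
variable (hmeas : ∀ i, Measurable (fun ω => (A i ω, B i ω)))
variable (hindep : ProbabilityTheory.iIndepFun
      (fun i ω => (A i ω, B i ω)) volume)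
variable (hident : ∀ i, ProbabilityTheory.IdentDistrib
      (fun ω => (A i ω, B i ω)) (fun ω => (A 0 ω, B 0 ω)) volume volume)
variable (μA μB : ℝ)
variable (hbA : ∀ i, Bdd (A i)) (hbB : ∀ i, Bdd (B i))
variable (hcA : (∫ ω, ctr A μA 0 ω) = 0) (hcB : (∫ ω, ctr B μB 0 ω) = 0)

open ProbabilityTheory in
include hmeas hindep hident in
lemma step (M : ℕ) (φ ψ : ℝ × ℝ → ℝ) (hφ : Measurable φ) (hψ : Measurable ψ)
    (hint1 : Integrable (fun ω => φ (∑ i ∈ Finset.range M, A i ω, ∑ i ∈ Finset.range M, B i ω))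
      (volume : Measure Ω))
    (hint2 : Integrable (fun ω => ψ (A M ω, B M ω)) (volume : Measure Ω)) :
    ∫ ω, φ (∑ i ∈ Finset.range M, A i ω, ∑ i ∈ Finset.range M, B i ω) * ψ (A M ω, B M ω)
      = (∫ ω, φ (∑ i ∈ Finset.range M, A i ω, ∑ i ∈ Finset.range M, B i ω))
        * ∫ ω, ψ (A 0 ω, B 0 ω) := by
  classical
  have hd : Disjoint (Finset.range M) ({M} : Finset ℕ) := by simp
  have h1 := hindep.indepFun_finset (Finset.range M) {M} hd hmeas
  set g : (↥(Finset.range M) → ℝ × ℝ) → ℝ :=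
    fun v => φ (∑ i, (v i).1, ∑ i, (v i).2) with hg_def
  set h : (↥({M} : Finset ℕ) → ℝ × ℝ) → ℝ :=
    fun v => ψ (v ⟨M, by simp⟩) with hh_def
  have hg : Measurable g := by
    apply hφ.comp
    exact (Finset.measurable_sum _ fun i _ => (measurable_pi_apply i).fst).prodMk
      (Finset.measurable_sum _ fun i _ => (measurable_pi_apply i).snd)
  have hh : Measurable h := hψ.comp (measurable_pi_apply _)
  have h2 := h1.comp hg hh
  have e1 : (g ∘ (fun ω (i : ↥(Finset.range M)) => (A (i : ℕ) ω, B (i : ℕ) ω)))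
      = fun ω => φ (∑ i ∈ Finset.range M, A i ω, ∑ i ∈ Finset.range M, B i ω) := by
    funext ω
    simp only [hg_def, Function.comp]
    rw [Finset.sum_coe_sort (Finset.range M) (fun i => A i ω),
      Finset.sum_coe_sort (Finset.range M) (fun i => B i ω)]
  have e2 : (h ∘ (fun ω (i : ↥({M} : Finset ℕ)) => (A (i : ℕ) ω, B (i : ℕ) ω)))
      = fun ω => ψ (A M ω, B M ω) := rfl
  rw [e1, e2] at h2
  have h3 : ∫ ω, φ (∑ i ∈ Finset.range M, A i ω, ∑ i ∈ Finset.range M, B i ω) * ψ (A M ω, B M ω)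
      = (∫ ω, φ (∑ i ∈ Finset.range M, A i ω, ∑ i ∈ Finset.range M, B i ω))
        * ∫ ω, ψ (A M ω, B M ω) := IndepFun.integral_fun_mul_eq_mul_integral h2 hint1.aestronglyMeasurable
          hint2.aestronglyMeasurable
  rw [h3]
  congr 1
  exact ((hident M).comp hψ).integral_eq

include hident in
lemma ident_int (l m M : ℕ) :
    ∫ ω, (ctr A μA M ω) ^ l * (ctr B μB M ω) ^ m
      = ∫ ω, (ctr A μA 0 ω) ^ l * (ctr B μB 0 ω) ^ m := by
  have hψ : Measurable (fun p : ℝ × ℝ => (p.1 - μA) ^ l * (p.2 - μB) ^ m) := by fun_prop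
  have h := ((hident M).comp hψ).integral_eq
  simpa [ctr, Function.comp] using h

include hmeas hindep hident hbA hbB in
lemma split (M j k l m : ℕ) :
    ∫ ω, (csum A μA M ω) ^ j * (csum B μB M ω) ^ k * ((ctr A μA M ω) ^ l * (ctr B μB M ω) ^ m)
      = (∫ ω, (csum A μA M ω) ^ j * (csum B μB M ω) ^ k)
        * ∫ ω, (ctr A μA 0 ω) ^ l * (ctr B μB 0 ω) ^ m := by
  have hφ : Measurable (fun p : ℝ × ℝ => (p.1 - M * μA) ^ j * (p.2 - M * μB) ^ k) := by fun_prop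
  have hψ : Measurable (fun p : ℝ × ℝ => (p.1 - μA) ^ l * (p.2 - μB) ^ m) := by fun_prop
  have hint1 : Integrable
      (fun ω => (fun p : ℝ × ℝ => (p.1 - M * μA) ^ j * (p.2 - M * μB) ^ k)
        (∑ i ∈ Finset.range M, A i ω, ∑ i ∈ Finset.range M, B i ω)) (volume : Measure Ω) := by
    have : Bdd (fun ω => (csum A μA M ω) ^ j * (csum B μB M ω) ^ k) :=
      ((Bdd.csum hbA M).pow j).mul ((Bdd.csum hbB M).pow k)
    have e : (fun ω => (csum A μA M ω) ^ j * (csum B μB M ω) ^ k)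
        = fun ω => (fun p : ℝ × ℝ => (p.1 - M * μA) ^ j * (p.2 - M * μB) ^ k)
          (∑ i ∈ Finset.range M, A i ω, ∑ i ∈ Finset.range M, B i ω) := by
      funext ω; simp [csum_eq]
    rw [← e]; exact this.integrable
  have hint2 : Integrable
      (fun ω => (fun p : ℝ × ℝ => (p.1 - μA) ^ l * (p.2 - μB) ^ m) (A M ω, B M ω))
      (volume : Measure Ω) := by
    have : Bdd (fun ω => (ctr A μA M ω) ^ l * (ctr B μB M ω) ^ m) :=
      ((Bdd.ctr hbA M).pow l).mul ((Bdd.ctr hbB M).pow m)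
    simpa [ctr] using this.integrable
  have h := step A B hmeas hindep hident M _ _ hφ hψ hint1 hint2
  simpa [ctr, csum_eq] using h

end RatioAux
namespace RatioAux
set_option linter.unusedSectionVars false
set_option maxHeartbeats 1000000

variable {Ω : Type*} [MeasureSpace Ω] [IsProbabilityMeasure (volume : Measure Ω)]

lemma iadd2 {f1 f2 : Ω → ℝ} (h1 : Bdd f1) (h2 : Bdd f2) :
    ∫ ω, (f1 ω + f2 ω) = (∫ ω, f1 ω) + ∫ ω, f2 ω :=
  integral_add h1.integrable h2.integrable

lemma iadd3 {f1 f2 f3 : Ω → ℝ} (h1 : Bdd f1) (h2 : Bdd f2) (h3 : Bdd f3) :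
    ∫ ω, (f1 ω + f2 ω + f3 ω) = (∫ ω, f1 ω) + (∫ ω, f2 ω) + ∫ ω, f3 ω := by
  rw [integral_add (h1.add h2).integrable h3.integrable, iadd2 h1 h2]

lemma iadd4 {f1 f2 f3 f4 : Ω → ℝ} (h1 : Bdd f1) (h2 : Bdd f2) (h3 : Bdd f3) (h4 : Bdd f4) :
    ∫ ω, (f1 ω + f2 ω + f3 ω + f4 ω)
      = (∫ ω, f1 ω) + (∫ ω, f2 ω) + (∫ ω, f3 ω) + ∫ ω, f4 ω := by
  rw [integral_add ((h1.add h2).add h3).integrable h4.integrable, iadd3 h1 h2 h3]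

lemma iadd5 {f1 f2 f3 f4 f5 : Ω → ℝ} (h1 : Bdd f1) (h2 : Bdd f2) (h3 : Bdd f3) (h4 : Bdd f4)
    (h5 : Bdd f5) :
    ∫ ω, (f1 ω + f2 ω + f3 ω + f4 ω + f5 ω)
      = (∫ ω, f1 ω) + (∫ ω, f2 ω) + (∫ ω, f3 ω) + (∫ ω, f4 ω) + ∫ ω, f5 ω := by
  rw [integral_add (((h1.add h2).add h3).add h4).integrable h5.integrable, iadd4 h1 h2 h3 h4]

lemma iadd6 {f1 f2 f3 f4 f5 f6 : Ω → ℝ} (h1 : Bdd f1) (h2 : Bdd f2) (h3 : Bdd f3) (h4 : Bdd f4)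
    (h5 : Bdd f5) (h6 : Bdd f6) :
    ∫ ω, (f1 ω + f2 ω + f3 ω + f4 ω + f5 ω + f6 ω)
      = (∫ ω, f1 ω) + (∫ ω, f2 ω) + (∫ ω, f3 ω) + (∫ ω, f4 ω) + (∫ ω, f5 ω) + ∫ ω, f6 ω := by
  rw [integral_add ((((h1.add h2).add h3).add h4).add h5).integrable h6.integrable,
    iadd5 h1 h2 h3 h4 h5]

lemma iadd8 {f1 f2 f3 f4 f5 f6 f7 f8 : Ω → ℝ} (h1 : Bdd f1) (h2 : Bdd f2) (h3 : Bdd f3)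
    (h4 : Bdd f4) (h5 : Bdd f5) (h6 : Bdd f6) (h7 : Bdd f7) (h8 : Bdd f8) :
    ∫ ω, (f1 ω + f2 ω + f3 ω + f4 ω + f5 ω + f6 ω + f7 ω + f8 ω)
      = (∫ ω, f1 ω) + (∫ ω, f2 ω) + (∫ ω, f3 ω) + (∫ ω, f4 ω) + (∫ ω, f5 ω) + (∫ ω, f6 ω)
        + (∫ ω, f7 ω) + ∫ ω, f8 ω := by
  rw [integral_add ((((((h1.add h2).add h3).add h4).add h5).add h6).add h7).integrable
    h8.integrable,
    integral_add (((((h1.add h2).add h3).add h4).add h5).add h6).integrable h7.integrable,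
    iadd6 h1 h2 h3 h4 h5 h6]

end RatioAux
namespace RatioAux
set_option linter.unusedSectionVars false
set_option maxHeartbeats 1000000

variable {Ω : Type*} [MeasureSpace Ω] [IsProbabilityMeasure (volume : Measure Ω)]
variable (A B : ℕ → Ω → ℝ)
variable (hmeas : ∀ i, Measurable (fun ω => (A i ω, B i ω)))
variable (hindep : ProbabilityTheory.iIndepFun
      (fun i ω => (A i ω, B i ω)) volume)
variable (hident : ∀ i, ProbabilityTheory.IdentDistrib
      (fun ω => (A i ω, B i ω)) (fun ω => (A 0 ω, B 0 ω)) volume volume)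
variable (μA μB : ℝ)
variable (hbA : ∀ i, Bdd (A i)) (hbB : ∀ i, Bdd (B i))
variable (hcA : (∫ ω, ctr A μA 0 ω) = 0) (hcB : (∫ ω, ctr B μB 0 ω) = 0)

include hmeas hindep hident hbA hbB hcA hcB in
lemma momT (M : ℕ) : ∫ ω, csum B μB M ω = 0 := by
  induction M with
  | zero => simp [csum]
  | succ M ih =>
    simp only [csum_succ]
    rw [iadd2 (Bdd.csum hbB M) (Bdd.ctr hbB M), ih]
    have h := ident_int A B hident μA μB 0 1 M
    simp only [pow_zero, pow_one, one_mul] at h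
    rw [h, hcB]; ring

include hmeas hindep hident hbA hbB hcA hcB in
lemma momW (M : ℕ) : ∫ ω, csum A μA M ω = 0 := by
  induction M with
  | zero => simp [csum]
  | succ M ih =>
    simp only [csum_succ]
    rw [iadd2 (Bdd.csum hbA M) (Bdd.ctr hbA M), ih]
    have h := ident_int A B hident μA μB 1 0 M
    simp only [pow_zero, pow_one, mul_one] at h
    rw [h, hcA]; ring

include hmeas hindep hident hbA hbB hcA hcB in
lemma momT2 (M : ℕ) :
    ∫ ω, csum B μB M ω ^ 2 = M * ∫ ω, ctr B μB 0 ω ^ 2 := by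
  induction M with
  | zero => simp [csum]
  | succ M ih =>
    have hT := Bdd.csum (μ := μB) hbB M
    have hV := Bdd.ctr (μ := μB) hbB M
    have e : ∀ ω, csum B μB (M+1) ω ^ 2
        = csum B μB M ω ^ 2 + 2 * (csum B μB M ω * ctr B μB M ω) + ctr B μB M ω ^ 2 := by
      intro ω; rw [csum_succ]; ring
    simp only [e]
    rw [iadd3 (hT.pow 2) (Bdd.smul 2 (hT.mul hV)) (hV.pow 2), ih]
    have hs := split A B hmeas hindep hident μA μB hbA hbB M 0 1 0 1
    simp only [pow_zero, pow_one, one_mul] at hs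
    have hid := ident_int A B hident μA μB 0 2 M
    simp only [pow_zero, one_mul] at hid
    rw [integral_const_mul, hs, hcB, hid]
    push_cast; ring

include hmeas hindep hident hbA hbB hcA hcB in
lemma momWT (M : ℕ) :
    ∫ ω, csum A μA M ω * csum B μB M ω
      = M * ∫ ω, ctr A μA 0 ω * ctr B μB 0 ω := by
  induction M with
  | zero => simp [csum]
  | succ M ih =>
    have hW := Bdd.csum (μ := μA) hbA M
    have hT := Bdd.csum (μ := μB) hbB M
    have hU := Bdd.ctr (μ := μA) hbA M
    have hV := Bdd.ctr (μ := μB) hbB M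
    have e : ∀ ω, csum A μA (M+1) ω * csum B μB (M+1) ω
        = csum A μA M ω * csum B μB M ω + csum A μA M ω * ctr B μB M ω
          + csum B μB M ω * ctr A μA M ω + ctr A μA M ω * ctr B μB M ω := by
      intro ω; rw [csum_succ, csum_succ]; ring
    simp only [e]
    rw [iadd4 (hW.mul hT) (hW.mul hV) (hT.mul hU) (hU.mul hV), ih]
    have hs1 := split A B hmeas hindep hident μA μB hbA hbB M 1 0 0 1
    simp only [pow_zero, pow_one, one_mul, mul_one] at hs1
    have hs2 := split A B hmeas hindep hident μA μB hbA hbB M 0 1 1 0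
    simp only [pow_zero, pow_one, one_mul, mul_one] at hs2
    have hid := ident_int A B hident μA μB 1 1 M
    simp only [pow_one] at hid
    rw [hs1, hs2, hid, hcA, hcB]
    push_cast; ring

include hmeas hindep hident hbA hbB hcA hcB in
lemma momT3 (M : ℕ) :
    ∫ ω, csum B μB M ω ^ 3 = M * ∫ ω, ctr B μB 0 ω ^ 3 := by
  induction M with
  | zero => simp [csum]
  | succ M ih =>
    have hT := Bdd.csum (μ := μB) hbB M
    have hV := Bdd.ctr (μ := μB) hbB M
    have e : ∀ ω, csum B μB (M+1) ω ^ 3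
        = csum B μB M ω ^ 3 + 3 * (csum B μB M ω ^ 2 * ctr B μB M ω)
          + 3 * (csum B μB M ω * ctr B μB M ω ^ 2) + ctr B μB M ω ^ 3 := by
      intro ω; rw [csum_succ]; ring
    simp only [e]
    rw [iadd4 (hT.pow 3) (Bdd.smul 3 ((hT.pow 2).mul hV)) (Bdd.smul 3 (hT.mul (hV.pow 2)))
      (hV.pow 3), ih]
    have hs1 := split A B hmeas hindep hident μA μB hbA hbB M 0 2 0 1
    simp only [pow_zero, pow_one, one_mul] at hs1
    have hs2 := split A B hmeas hindep hident μA μB hbA hbB M 0 1 0 2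
    simp only [pow_zero, pow_one, one_mul] at hs2
    have hid := ident_int A B hident μA μB 0 3 M
    simp only [pow_zero, one_mul] at hid
    rw [integral_const_mul, integral_const_mul, hs1, hs2, hid, hcB,
      momT A B hmeas hindep hident μA μB hbA hbB hcA hcB M]
    push_cast; ring

include hmeas hindep hident hbA hbB hcA hcB in
lemma momWT2 (M : ℕ) :
    ∫ ω, csum A μA M ω * csum B μB M ω ^ 2
      = M * ∫ ω, ctr A μA 0 ω * ctr B μB 0 ω ^ 2 := by
  induction M with
  | zero => simp [csum]
  | succ M ih =>
    have hW := Bdd.csum (μ := μA) hbA M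
    have hT := Bdd.csum (μ := μB) hbB M
    have hU := Bdd.ctr (μ := μA) hbA M
    have hV := Bdd.ctr (μ := μB) hbB M
    have e : ∀ ω, csum A μA (M+1) ω * csum B μB (M+1) ω ^ 2
        = csum A μA M ω * csum B μB M ω ^ 2
          + 2 * (csum A μA M ω * csum B μB M ω * ctr B μB M ω)
          + csum A μA M ω * ctr B μB M ω ^ 2
          + csum B μB M ω ^ 2 * ctr A μA M ω
          + 2 * (csum B μB M ω * (ctr A μA M ω * ctr B μB M ω))
          + ctr A μA M ω * ctr B μB M ω ^ 2 := by
      intro ω; rw [csum_succ, csum_succ]; ring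
    simp only [e]
    rw [iadd6 (hW.mul (hT.pow 2)) (Bdd.smul 2 ((hW.mul hT).mul hV)) (hW.mul (hV.pow 2))
      ((hT.pow 2).mul hU) (Bdd.smul 2 (hT.mul (hU.mul hV))) (hU.mul (hV.pow 2)), ih]
    have hs1 := split A B hmeas hindep hident μA μB hbA hbB M 1 1 0 1
    simp only [pow_zero, pow_one, one_mul, mul_one] at hs1
    have hs2 := split A B hmeas hindep hident μA μB hbA hbB M 1 0 0 2
    simp only [pow_zero, pow_one, one_mul, mul_one] at hs2
    have hs3 := split A B hmeas hindep hident μA μB hbA hbB M 0 2 1 0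
    simp only [pow_zero, pow_one, one_mul, mul_one] at hs3
    have hs4 := split A B hmeas hindep hident μA μB hbA hbB M 0 1 1 1
    simp only [pow_zero, pow_one, one_mul, mul_one] at hs4
    have hid := ident_int A B hident μA μB 1 2 M
    simp only [pow_one] at hid
    rw [integral_const_mul, integral_const_mul, hs1, hs2, hs3, hs4, hid, hcA, hcB,
      momW A B hmeas hindep hident μA μB hbA hbB hcA hcB M, momT A B hmeas hindep hident μA μB hbA hbB hcA hcB M]
    push_cast; ring

include hmeas hindep hident hbA hbB hcA hcB in
lemma momT4 (M : ℕ) :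
    ∫ ω, csum B μB M ω ^ 4
      = M * (∫ ω, ctr B μB 0 ω ^ 4)
        + 3 * M * ((M : ℝ) - 1) * (∫ ω, ctr B μB 0 ω ^ 2) ^ 2 := by
  induction M with
  | zero => simp [csum]
  | succ M ih =>
    have hT := Bdd.csum (μ := μB) hbB M
    have hV := Bdd.ctr (μ := μB) hbB M
    have e : ∀ ω, csum B μB (M+1) ω ^ 4
        = csum B μB M ω ^ 4 + 4 * (csum B μB M ω ^ 3 * ctr B μB M ω)
          + 6 * (csum B μB M ω ^ 2 * ctr B μB M ω ^ 2)
          + 4 * (csum B μB M ω * ctr B μB M ω ^ 3) + ctr B μB M ω ^ 4 := by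
      intro ω; rw [csum_succ]; ring
    simp only [e]
    rw [iadd5 (hT.pow 4) (Bdd.smul 4 ((hT.pow 3).mul hV))
      (Bdd.smul 6 ((hT.pow 2).mul (hV.pow 2))) (Bdd.smul 4 (hT.mul (hV.pow 3))) (hV.pow 4), ih]
    have hs1 := split A B hmeas hindep hident μA μB hbA hbB M 0 3 0 1
    simp only [pow_zero, pow_one, one_mul] at hs1
    have hs2 := split A B hmeas hindep hident μA μB hbA hbB M 0 2 0 2
    simp only [pow_zero, pow_one, one_mul] at hs2
    have hs3 := split A B hmeas hindep hident μA μB hbA hbB M 0 1 0 3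
    simp only [pow_zero, pow_one, one_mul] at hs3
    have hid := ident_int A B hident μA μB 0 4 M
    simp only [pow_zero, one_mul] at hid
    rw [integral_const_mul, integral_const_mul, integral_const_mul, hs1, hs2, hs3, hid, hcB,
      momT A B hmeas hindep hident μA μB hbA hbB hcA hcB M, momT2 A B hmeas hindep hident μA μB hbA hbB hcA hcB M]
    push_cast; ring

include hmeas hindep hident hbA hbB hcA hcB in
lemma momWT3 (M : ℕ) :
    ∫ ω, csum A μA M ω * csum B μB M ω ^ 3
      = M * (∫ ω, ctr A μA 0 ω * ctr B μB 0 ω ^ 3)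
        + 3 * M * ((M : ℝ) - 1) * (∫ ω, ctr A μA 0 ω * ctr B μB 0 ω)
          * ∫ ω, ctr B μB 0 ω ^ 2 := by
  induction M with
  | zero => simp [csum]
  | succ M ih =>
    have hW := Bdd.csum (μ := μA) hbA M
    have hT := Bdd.csum (μ := μB) hbB M
    have hU := Bdd.ctr (μ := μA) hbA M
    have hV := Bdd.ctr (μ := μB) hbB M
    have e : ∀ ω, csum A μA (M+1) ω * csum B μB (M+1) ω ^ 3
        = csum A μA M ω * csum B μB M ω ^ 3
          + 3 * (csum A μA M ω * csum B μB M ω ^ 2 * ctr B μB M ω)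
          + 3 * (csum A μA M ω * csum B μB M ω * ctr B μB M ω ^ 2)
          + csum A μA M ω * ctr B μB M ω ^ 3
          + csum B μB M ω ^ 3 * ctr A μA M ω
          + 3 * (csum B μB M ω ^ 2 * (ctr A μA M ω * ctr B μB M ω))
          + 3 * (csum B μB M ω * (ctr A μA M ω * ctr B μB M ω ^ 2))
          + ctr A μA M ω * ctr B μB M ω ^ 3 := by
      intro ω; rw [csum_succ, csum_succ]; ring
    simp only [e]
    rw [iadd8 (hW.mul (hT.pow 3)) (Bdd.smul 3 ((hW.mul (hT.pow 2)).mul hV))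
      (Bdd.smul 3 ((hW.mul hT).mul (hV.pow 2))) (hW.mul (hV.pow 3)) ((hT.pow 3).mul hU)
      (Bdd.smul 3 ((hT.pow 2).mul (hU.mul hV))) (Bdd.smul 3 (hT.mul (hU.mul (hV.pow 2))))
      (hU.mul (hV.pow 3)), ih]
    have hs1 := split A B hmeas hindep hident μA μB hbA hbB M 1 2 0 1
    simp only [pow_zero, pow_one, one_mul, mul_one] at hs1
    have hs2 := split A B hmeas hindep hident μA μB hbA hbB M 1 1 0 2
    simp only [pow_zero, pow_one, one_mul, mul_one] at hs2
    have hs3 := split A B hmeas hindep hident μA μB hbA hbB M 1 0 0 3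
    simp only [pow_zero, pow_one, one_mul, mul_one] at hs3
    have hs4 := split A B hmeas hindep hident μA μB hbA hbB M 0 3 1 0
    simp only [pow_zero, pow_one, one_mul, mul_one] at hs4
    have hs5 := split A B hmeas hindep hident μA μB hbA hbB M 0 2 1 1
    simp only [pow_zero, pow_one, one_mul, mul_one] at hs5
    have hs6 := split A B hmeas hindep hident μA μB hbA hbB M 0 1 1 2
    simp only [pow_zero, pow_one, one_mul, mul_one] at hs6
    have hid := ident_int A B hident μA μB 1 3 M
    simp only [pow_one] at hid
    rw [integral_const_mul, integral_const_mul, integral_const_mul, integral_const_mul,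
      hs1, hs2, hs3, hs4, hs5, hs6, hid, hcA, hcB,
      momW A B hmeas hindep hident μA μB hbA hbB hcA hcB M, momT A B hmeas hindep hident μA μB hbA hbB hcA hcB M,
      momT2 A B hmeas hindep hident μA μB hbA hbB hcA hcB M,
      momWT A B hmeas hindep hident μA μB hbA hbB hcA hcB M]
    push_cast; ring

end RatioAux
namespace RatioAux
set_option linter.unusedSectionVars false
set_option maxHeartbeats 2000000

variable {Ω : Type*} [MeasureSpace Ω] [IsProbabilityMeasure (volume : Measure Ω)]
variable (A B : ℕ → Ω → ℝ)
variable (hmeas : ∀ i, Measurable (fun ω => (A i ω, B i ω)))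
variable (hindep : ProbabilityTheory.iIndepFun
      (fun i ω => (A i ω, B i ω)) volume)
variable (hident : ∀ i, ProbabilityTheory.IdentDistrib
      (fun ω => (A i ω, B i ω)) (fun ω => (A 0 ω, B 0 ω)) volume volume)
variable (μA μB : ℝ)
variable (hbA : ∀ i, Bdd (A i)) (hbB : ∀ i, Bdd (B i))
variable (hcA : (∫ ω, ctr A μA 0 ω) = 0) (hcB : (∫ ω, ctr B μB 0 ω) = 0)

include hmeas hindep hident hbA hbB hcA hcB in
lemma intSA (M : ℕ) : ∫ ω, (∑ i ∈ Finset.range M, A i ω) = M * μA := by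
  have e : ∀ ω, (∑ i ∈ Finset.range M, A i ω) = csum A μA M ω + (M : ℝ) * μA := by
    intro ω; rw [csum_eq]; ring
  simp only [e]
  rw [iadd2 (Bdd.csum hbA M) (Bdd.const _), momW A B hmeas hindep hident μA μB hbA hbB hcA hcB M,
    integral_const]
  simp

include hmeas hindep hident hbA hbB hcA hcB in
lemma intSAT (M k : ℕ) :
    ∫ ω, (∑ i ∈ Finset.range M, A i ω) * csum B μB M ω ^ k
      = (∫ ω, csum A μA M ω * csum B μB M ω ^ k)
        + ((M : ℝ) * μA) * ∫ ω, csum B μB M ω ^ k := by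
  have e : ∀ ω, (∑ i ∈ Finset.range M, A i ω) * csum B μB M ω ^ k
      = csum A μA M ω * csum B μB M ω ^ k + ((M : ℝ) * μA) * csum B μB M ω ^ k := by
    intro ω
    rw [csum_eq A μA M ω]; ring
  simp only [e]
  rw [iadd2 ((Bdd.csum hbA M).mul ((Bdd.csum hbB M).pow k))
    (Bdd.smul _ ((Bdd.csum hbB M).pow k)), integral_const_mul]

end RatioAux
namespace RatioAux
set_option linter.unusedSectionVars false
set_option maxHeartbeats 2000000

variable {Ω : Type*} [MeasureSpace Ω] [IsProbabilityMeasure (volume : Measure Ω)]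
variable (A B : ℕ → Ω → ℝ)
variable (hmeas : ∀ i, Measurable (fun ω => (A i ω, B i ω)))
variable (hindep : ProbabilityTheory.iIndepFun
      (fun i ω => (A i ω, B i ω)) volume)
variable (hident : ∀ i, ProbabilityTheory.IdentDistrib
      (fun ω => (A i ω, B i ω)) (fun ω => (A 0 ω, B 0 ω)) volume volume)
variable (μA μB : ℝ)
variable (hbA : ∀ i, Bdd (A i)) (hbB : ∀ i, Bdd (B i))
variable (hcA : (∫ ω, ctr A μA 0 ω) = 0) (hcB : (∫ ω, ctr B μB 0 ω) = 0)

lemma Bdd.abs {f : Ω → ℝ} (hf : Bdd f) : Bdd (fun ω => |f ω|) := by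
  obtain ⟨hm, C, hC⟩ := hf
  exact ⟨hm.abs, C, fun ω => by simpa using hC ω⟩

include hmeas hindep hident hbA hbB hcA hcB in
lemma main_est (Ca b : ℝ) (hb : 0 < b) (hCa : 0 ≤ Ca)
    (hA : ∀ i ω, 0 < A i ω ∧ A i ω ≤ Ca)
    (hB : ∀ i ω, b ≤ B i ω) (hμB : 0 < μB) (M : ℕ) (hM : 1 ≤ M) :
    |(∫ ω, (∑ i ∈ Finset.range M, A i ω) / (∑ i ∈ Finset.range M, B i ω))
        - μA / μB - (M : ℝ)⁻¹ * (μB ^ 2)⁻¹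
          * (μA / μB * (∫ ω, ctr B μB 0 ω ^ 2) - ∫ ω, ctr A μA 0 ω * ctr B μB 0 ω)|
      ≤ (|∫ ω, ctr A μA 0 ω * ctr B μB 0 ω ^ 2| / μB ^ 3
          + (|∫ ω, ctr A μA 0 ω * ctr B μB 0 ω ^ 3|
            + 3 * |∫ ω, ctr A μA 0 ω * ctr B μB 0 ω| * |∫ ω, ctr B μB 0 ω ^ 2|
            + |μA| * |∫ ω, ctr B μB 0 ω ^ 3|
            + Ca / b * ((∫ ω, ctr B μB 0 ω ^ 4) + 3 * (∫ ω, ctr B μB 0 ω ^ 2) ^ 2)) / μB ^ 4)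
        / (M : ℝ) ^ 2 := by
  have hN1 : (1 : ℝ) ≤ (M : ℝ) := by exact_mod_cast hM
  have hN0 : (0 : ℝ) < (M : ℝ) := lt_of_lt_of_le one_pos hN1
  have hNne : (M : ℝ) ≠ 0 := hN0.ne'
  have hμBne : μB ≠ 0 := hμB.ne'
  -- lower bound on S_B and bounds on S_A
  have hSBb : ∀ ω, (M : ℝ) * b ≤ ∑ i ∈ Finset.range M, B i ω := by
    intro ω
    calc (M : ℝ) * b = ∑ _i ∈ Finset.range M, b := by
          rw [Finset.sum_const, Finset.card_range, nsmul_eq_mul]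
      _ ≤ ∑ i ∈ Finset.range M, B i ω := Finset.sum_le_sum fun i _ => hB i ω
  have hSBpos : ∀ ω, 0 < ∑ i ∈ Finset.range M, B i ω := by
    intro ω; exact lt_of_lt_of_le (by positivity) (hSBb ω)
  have hSA0 : ∀ ω, 0 ≤ ∑ i ∈ Finset.range M, A i ω := by
    intro ω; exact Finset.sum_nonneg fun i _ => (hA i ω).1.le
  have hSAc : ∀ ω, (∑ i ∈ Finset.range M, A i ω) ≤ (M : ℝ) * Ca := by
    intro ω
    calc (∑ i ∈ Finset.range M, A i ω) ≤ ∑ _i ∈ Finset.range M, Ca :=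
          Finset.sum_le_sum fun i _ => (hA i ω).2
      _ = (M : ℝ) * Ca := by rw [Finset.sum_const, Finset.card_range, nsmul_eq_mul]
  -- boundedness facts
  have bSA : Bdd (fun ω => ∑ i ∈ Finset.range M, A i ω) := Bdd.sum _ _ fun i _ => hbA i
  have bSB : Bdd (fun ω => ∑ i ∈ Finset.range M, B i ω) := Bdd.sum _ _ fun i _ => hbB i
  have bT : Bdd (csum B μB M) := Bdd.csum hbB M
  -- pointwise expansion
  have e : ∀ ω, (∑ i ∈ Finset.range M, A i ω) / (∑ i ∈ Finset.range M, B i ω)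
      = (1 / ((M : ℝ) * μB)) * (∑ i ∈ Finset.range M, A i ω)
        + (-(1 / ((M : ℝ) * μB) ^ 2)) * ((∑ i ∈ Finset.range M, A i ω) * csum B μB M ω)
        + (1 / ((M : ℝ) * μB) ^ 3) * ((∑ i ∈ Finset.range M, A i ω) * csum B μB M ω ^ 2)
        + (-(1 / ((M : ℝ) * μB) ^ 4)) * ((∑ i ∈ Finset.range M, A i ω) * csum B μB M ω ^ 3)
        + (1 / ((M : ℝ) * μB) ^ 4) * ((∑ i ∈ Finset.range M, A i ω) * csum B μB M ω ^ 4
            / (∑ i ∈ Finset.range M, B i ω)) := by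
    intro ω
    have ht : csum B μB M ω = (∑ i ∈ Finset.range M, B i ω) - (M : ℝ) * μB := by
      rw [csum_eq]
    rw [ht]
    have hs : (∑ i ∈ Finset.range M, B i ω) ≠ 0 := (hSBpos ω).ne'
    field_simp
    ring
  -- Bdd of the five pieces
  have b1 : Bdd (fun ω => (1 / ((M : ℝ) * μB)) * (∑ i ∈ Finset.range M, A i ω)) :=
    Bdd.smul _ bSA
  have b2 : Bdd (fun ω => (-(1 / ((M : ℝ) * μB) ^ 2))
      * ((∑ i ∈ Finset.range M, A i ω) * csum B μB M ω)) := Bdd.smul _ (bSA.mul bT)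
  have b3 : Bdd (fun ω => (1 / ((M : ℝ) * μB) ^ 3)
      * ((∑ i ∈ Finset.range M, A i ω) * csum B μB M ω ^ 2)) :=
    Bdd.smul _ (bSA.mul (bT.pow 2))
  have b4 : Bdd (fun ω => (-(1 / ((M : ℝ) * μB) ^ 4))
      * ((∑ i ∈ Finset.range M, A i ω) * csum B μB M ω ^ 3)) :=
    Bdd.smul _ (bSA.mul (bT.pow 3))
  have hptw : ∀ ω, |(∑ i ∈ Finset.range M, A i ω) * csum B μB M ω ^ 4
      / (∑ i ∈ Finset.range M, B i ω)| ≤ (Ca / b) * csum B μB M ω ^ 4 := by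
    intro ω
    have h1 : 0 ≤ (∑ i ∈ Finset.range M, A i ω) * csum B μB M ω ^ 4
        / (∑ i ∈ Finset.range M, B i ω) :=
      div_nonneg (mul_nonneg (hSA0 ω) (by positivity)) (hSBpos ω).le
    rw [abs_of_nonneg h1]
    have h2 : (∑ i ∈ Finset.range M, A i ω) * csum B μB M ω ^ 4
        / (∑ i ∈ Finset.range M, B i ω)
        = ((∑ i ∈ Finset.range M, A i ω) / (∑ i ∈ Finset.range M, B i ω))
          * csum B μB M ω ^ 4 := by ring
    rw [h2]
    have h3 : (∑ i ∈ Finset.range M, A i ω) / (∑ i ∈ Finset.range M, B i ω) ≤ Ca / b := by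
      have h4 := div_le_div₀ (by positivity : (0:ℝ) ≤ (M : ℝ) * Ca) (hSAc ω)
        (by positivity : (0:ℝ) < (M : ℝ) * b) (hSBb ω)
      rwa [mul_div_mul_left _ _ hNne] at h4
    exact mul_le_mul_of_nonneg_right h3 (by positivity)
  have b5' : Bdd (fun ω => (∑ i ∈ Finset.range M, A i ω) * csum B μB M ω ^ 4
      / (∑ i ∈ Finset.range M, B i ω)) := by
    obtain ⟨CT, hCT⟩ := bT.2
    refine ⟨(bSA.meas.mul (bT.pow 4).meas).div bSB.meas, (Ca / b) * CT ^ 4, fun ω => ?_⟩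
    refine (hptw ω).trans (mul_le_mul_of_nonneg_left ?_ (by positivity))
    calc csum B μB M ω ^ 4 = |csum B μB M ω| ^ 4 := by
          rw [pow_abs, abs_of_nonneg (by positivity)]
      _ ≤ CT ^ 4 := pow_le_pow_left₀ (abs_nonneg _) (hCT ω) 4
  have b5 : Bdd (fun ω => (1 / ((M : ℝ) * μB) ^ 4)
      * ((∑ i ∈ Finset.range M, A i ω) * csum B μB M ω ^ 4
        / (∑ i ∈ Finset.range M, B i ω))) := Bdd.smul _ b5'
  -- the three product-moment integrals
  have hI1 : ∫ ω, (∑ i ∈ Finset.range M, A i ω) * csum B μB M ω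
      = (M : ℝ) * ∫ ω, ctr A μA 0 ω * ctr B μB 0 ω := by
    have h := intSAT A B hmeas hindep hident μA μB hbA hbB hcA hcB M 1
    simp only [pow_one] at h
    rw [h, momWT A B hmeas hindep hident μA μB hbA hbB hcA hcB M,
      momT A B hmeas hindep hident μA μB hbA hbB hcA hcB M]
    ring
  have hI2 : ∫ ω, (∑ i ∈ Finset.range M, A i ω) * csum B μB M ω ^ 2
      = (M : ℝ) * (∫ ω, ctr A μA 0 ω * ctr B μB 0 ω ^ 2)
        + (M : ℝ) ^ 2 * μA * ∫ ω, ctr B μB 0 ω ^ 2 := by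
    rw [intSAT A B hmeas hindep hident μA μB hbA hbB hcA hcB M 2,
      momWT2 A B hmeas hindep hident μA μB hbA hbB hcA hcB M,
      momT2 A B hmeas hindep hident μA μB hbA hbB hcA hcB M]
    ring
  have hI3 : ∫ ω, (∑ i ∈ Finset.range M, A i ω) * csum B μB M ω ^ 3
      = (M : ℝ) * (∫ ω, ctr A μA 0 ω * ctr B μB 0 ω ^ 3)
        + 3 * (M : ℝ) * ((M : ℝ) - 1) * (∫ ω, ctr A μA 0 ω * ctr B μB 0 ω)
          * (∫ ω, ctr B μB 0 ω ^ 2)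
        + (M : ℝ) ^ 2 * μA * ∫ ω, ctr B μB 0 ω ^ 3 := by
    rw [intSAT A B hmeas hindep hident μA μB hbA hbB hcA hcB M 3,
      momWT3 A B hmeas hindep hident μA μB hbA hbB hcA hcB M,
      momT3 A B hmeas hindep hident μA μB hbA hbB hcA hcB M]
    ring
  -- exact expression for the integral of the ratio
  have hint : ∫ ω, (∑ i ∈ Finset.range M, A i ω) / (∑ i ∈ Finset.range M, B i ω)
      = (1 / ((M : ℝ) * μB)) * ((M : ℝ) * μA)
        + (-(1 / ((M : ℝ) * μB) ^ 2)) * ((M : ℝ) * ∫ ω, ctr A μA 0 ω * ctr B μB 0 ω)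
        + (1 / ((M : ℝ) * μB) ^ 3) * ((M : ℝ) * (∫ ω, ctr A μA 0 ω * ctr B μB 0 ω ^ 2)
            + (M : ℝ) ^ 2 * μA * ∫ ω, ctr B μB 0 ω ^ 2)
        + (-(1 / ((M : ℝ) * μB) ^ 4)) * ((M : ℝ) * (∫ ω, ctr A μA 0 ω * ctr B μB 0 ω ^ 3)
            + 3 * (M : ℝ) * ((M : ℝ) - 1) * (∫ ω, ctr A μA 0 ω * ctr B μB 0 ω)
              * (∫ ω, ctr B μB 0 ω ^ 2)
            + (M : ℝ) ^ 2 * μA * ∫ ω, ctr B μB 0 ω ^ 3)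
        + (1 / ((M : ℝ) * μB) ^ 4) * ∫ ω, (∑ i ∈ Finset.range M, A i ω)
            * csum B μB M ω ^ 4 / (∑ i ∈ Finset.range M, B i ω) := by
    simp only [e]
    rw [iadd5 b1 b2 b3 b4 b5, integral_const_mul, integral_const_mul, integral_const_mul,
      integral_const_mul, integral_const_mul,
      intSA A B hmeas hindep hident μA μB hbA hbB hcA hcB M, hI1, hI2, hI3]
  -- exact expression for the deviation
  have hD : (∫ ω, (∑ i ∈ Finset.range M, A i ω) / (∑ i ∈ Finset.range M, B i ω))
      - μA / μB - (M : ℝ)⁻¹ * (μB ^ 2)⁻¹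
        * (μA / μB * (∫ ω, ctr B μB 0 ω ^ 2) - ∫ ω, ctr A μA 0 ω * ctr B μB 0 ω)
      = (∫ ω, ctr A μA 0 ω * ctr B μB 0 ω ^ 2) / ((M : ℝ) ^ 2 * μB ^ 3)
        - ((∫ ω, ctr A μA 0 ω * ctr B μB 0 ω ^ 3)
            + 3 * ((M : ℝ) - 1) * (∫ ω, ctr A μA 0 ω * ctr B μB 0 ω)
              * (∫ ω, ctr B μB 0 ω ^ 2)
            + (M : ℝ) * μA * ∫ ω, ctr B μB 0 ω ^ 3) / ((M : ℝ) ^ 3 * μB ^ 4)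
        + (∫ ω, (∑ i ∈ Finset.range M, A i ω)
            * csum B μB M ω ^ 4 / (∑ i ∈ Finset.range M, B i ω))
          / ((M : ℝ) ^ 4 * μB ^ 4) := by
    rw [hint]
    field_simp
    ring
  rw [hD]
  -- remainder bound
  have hq04 : 0 ≤ ∫ ω, ctr B μB 0 ω ^ 4 := integral_nonneg fun ω => by positivity
  have hR : |∫ ω, (∑ i ∈ Finset.range M, A i ω)
      * csum B μB M ω ^ 4 / (∑ i ∈ Finset.range M, B i ω)|
      ≤ (Ca / b) * ((M : ℝ) * (∫ ω, ctr B μB 0 ω ^ 4)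
        + 3 * (M : ℝ) * ((M : ℝ) - 1) * (∫ ω, ctr B μB 0 ω ^ 2) ^ 2) := by
    have habs : |∫ ω, (∑ i ∈ Finset.range M, A i ω)
        * csum B μB M ω ^ 4 / (∑ i ∈ Finset.range M, B i ω)|
        ≤ ∫ ω, |(∑ i ∈ Finset.range M, A i ω)
          * csum B μB M ω ^ 4 / (∑ i ∈ Finset.range M, B i ω)| := by
      have h := norm_integral_le_integral_norm (μ := (volume : Measure Ω))
        (fun ω => (∑ i ∈ Finset.range M, A i ω)
          * csum B μB M ω ^ 4 / (∑ i ∈ Finset.range M, B i ω))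
      simpa only [Real.norm_eq_abs] using h
    refine habs.trans ?_
    calc ∫ ω, |(∑ i ∈ Finset.range M, A i ω)
          * csum B μB M ω ^ 4 / (∑ i ∈ Finset.range M, B i ω)|
        ≤ ∫ ω, (Ca / b) * csum B μB M ω ^ 4 :=
          integral_mono b5'.abs.integrable (Bdd.smul _ (bT.pow 4)).integrable hptw
      _ = (Ca / b) * ∫ ω, csum B μB M ω ^ 4 := integral_const_mul _ _
      _ = (Ca / b) * ((M : ℝ) * (∫ ω, ctr B μB 0 ω ^ 4)
          + 3 * (M : ℝ) * ((M : ℝ) - 1) * (∫ ω, ctr B μB 0 ω ^ 2) ^ 2) := by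
          rw [momT4 A B hmeas hindep hident μA μB hbA hbB hcA hcB M]
  -- put the three pieces together
  set x12 := ∫ ω, ctr A μA 0 ω * ctr B μB 0 ω ^ 2 with hx12
  set x13 := ∫ ω, ctr A μA 0 ω * ctr B μB 0 ω ^ 3 with hx13
  set x11 := ∫ ω, ctr A μA 0 ω * ctr B μB 0 ω with hx11
  set y2 := ∫ ω, ctr B μB 0 ω ^ 2 with hy2
  set y3 := ∫ ω, ctr B μB 0 ω ^ 3 with hy3
  set y4 := ∫ ω, ctr B μB 0 ω ^ 4 with hy4
  set R := ∫ ω, (∑ i ∈ Finset.range M, A i ω)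
      * csum B μB M ω ^ 4 / (∑ i ∈ Finset.range M, B i ω) with hRdef
  have e1 : |x12 / ((M : ℝ) ^ 2 * μB ^ 3)| = (|x12| / μB ^ 3) / (M : ℝ) ^ 2 := by
    rw [abs_div, abs_of_pos (show (0:ℝ) < (M : ℝ) ^ 2 * μB ^ 3 by positivity)]
    ring
  have e2 : |(x13 + 3 * ((M : ℝ) - 1) * x11 * y2 + (M : ℝ) * μA * y3)
      / ((M : ℝ) ^ 3 * μB ^ 4)|
      ≤ ((|x13| + 3 * |x11| * |y2| + |μA| * |y3|) / μB ^ 4) / (M : ℝ) ^ 2 := by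
    rw [abs_div, abs_of_pos (show (0:ℝ) < (M : ℝ) ^ 3 * μB ^ 4 by positivity)]
    have hnum : |x13 + 3 * ((M : ℝ) - 1) * x11 * y2 + (M : ℝ) * μA * y3|
        ≤ (M : ℝ) * (|x13| + 3 * |x11| * |y2| + |μA| * |y3|) := by
      have t1 := abs_add_le (x13 + 3 * ((M : ℝ) - 1) * x11 * y2) ((M : ℝ) * μA * y3)
      have t2 := abs_add_le x13 (3 * ((M : ℝ) - 1) * x11 * y2)
      have t3 : |3 * ((M : ℝ) - 1) * x11 * y2| = 3 * ((M : ℝ) - 1) * |x11| * |y2| := by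
        rw [abs_mul, abs_mul, abs_of_nonneg (by linarith : (0:ℝ) ≤ 3 * ((M : ℝ) - 1))]
      have t4 : |(M : ℝ) * μA * y3| = (M : ℝ) * |μA| * |y3| := by
        rw [abs_mul, abs_mul, abs_of_pos hN0]
      nlinarith [abs_nonneg x13, abs_nonneg x11, abs_nonneg y2, abs_nonneg μA, abs_nonneg y3,
        mul_nonneg (abs_nonneg x11) (abs_nonneg y2), mul_nonneg (abs_nonneg μA) (abs_nonneg y3)]
    calc |x13 + 3 * ((M : ℝ) - 1) * x11 * y2 + (M : ℝ) * μA * y3| / ((M : ℝ) ^ 3 * μB ^ 4)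
        ≤ ((M : ℝ) * (|x13| + 3 * |x11| * |y2| + |μA| * |y3|)) / ((M : ℝ) ^ 3 * μB ^ 4) := by
          gcongr
      _ = ((|x13| + 3 * |x11| * |y2| + |μA| * |y3|) / μB ^ 4) / (M : ℝ) ^ 2 := by
          field_simp
  have e3 : |R / ((M : ℝ) ^ 4 * μB ^ 4)|
      ≤ (Ca / b * (y4 + 3 * y2 ^ 2) / μB ^ 4) / (M : ℝ) ^ 2 := by
    rw [abs_div, abs_of_pos (show (0:ℝ) < (M : ℝ) ^ 4 * μB ^ 4 by positivity)]
    have hR2 : |R| ≤ (Ca / b) * (y4 + 3 * y2 ^ 2) * (M : ℝ) ^ 2 := by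
      refine hR.trans ?_
      have hcab : (0:ℝ) ≤ Ca / b := div_nonneg hCa hb.le
      have h1 : (M:ℝ) * y4 ≤ (M:ℝ) ^ 2 * y4 := by
        nlinarith [mul_nonneg (mul_nonneg hN0.le (by linarith : (0:ℝ) ≤ (M:ℝ) - 1)) hq04]
      have h2 : 3 * (M:ℝ) * ((M:ℝ) - 1) * y2 ^ 2 ≤ 3 * (M:ℝ) ^ 2 * y2 ^ 2 := by
        nlinarith [mul_nonneg hN0.le (sq_nonneg y2)]
      have h3 : Ca / b * ((M:ℝ) * y4 + 3 * (M:ℝ) * ((M:ℝ) - 1) * y2 ^ 2)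
          ≤ Ca / b * ((M:ℝ) ^ 2 * y4 + 3 * (M:ℝ) ^ 2 * y2 ^ 2) := by
        apply mul_le_mul_of_nonneg_left _ hcab
        linarith
      have h4 : Ca / b * ((M:ℝ) ^ 2 * y4 + 3 * (M:ℝ) ^ 2 * y2 ^ 2)
          = Ca / b * (y4 + 3 * y2 ^ 2) * (M:ℝ) ^ 2 := by ring
      linarith
    calc |R| / ((M : ℝ) ^ 4 * μB ^ 4)
        ≤ ((Ca / b) * (y4 + 3 * y2 ^ 2) * (M : ℝ) ^ 2) / ((M : ℝ) ^ 4 * μB ^ 4) := by gcongr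
      _ = (Ca / b * (y4 + 3 * y2 ^ 2) / μB ^ 4) / (M : ℝ) ^ 2 := by
          field_simp
  have tri : |x12 / ((M : ℝ) ^ 2 * μB ^ 3)
      - (x13 + 3 * ((M : ℝ) - 1) * x11 * y2 + (M : ℝ) * μA * y3) / ((M : ℝ) ^ 3 * μB ^ 4)
      + R / ((M : ℝ) ^ 4 * μB ^ 4)|
      ≤ |x12 / ((M : ℝ) ^ 2 * μB ^ 3)|
        + |(x13 + 3 * ((M : ℝ) - 1) * x11 * y2 + (M : ℝ) * μA * y3)
            / ((M : ℝ) ^ 3 * μB ^ 4)|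
        + |R / ((M : ℝ) ^ 4 * μB ^ 4)| := by
    have u1 := abs_add_le (x12 / ((M : ℝ) ^ 2 * μB ^ 3)
      - (x13 + 3 * ((M : ℝ) - 1) * x11 * y2 + (M : ℝ) * μA * y3) / ((M : ℝ) ^ 3 * μB ^ 4))
      (R / ((M : ℝ) ^ 4 * μB ^ 4))
    have u2 := abs_sub (x12 / ((M : ℝ) ^ 2 * μB ^ 3))
      ((x13 + 3 * ((M : ℝ) - 1) * x11 * y2 + (M : ℝ) * μA * y3) / ((M : ℝ) ^ 3 * μB ^ 4))
    linarith
  have efin : (|x12| / μB ^ 3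
      + (|x13| + 3 * |x11| * |y2| + |μA| * |y3| + Ca / b * (y4 + 3 * y2 ^ 2)) / μB ^ 4)
        / (M : ℝ) ^ 2
      = (|x12| / μB ^ 3) / (M : ℝ) ^ 2
        + ((|x13| + 3 * |x11| * |y2| + |μA| * |y3|) / μB ^ 4) / (M : ℝ) ^ 2
        + (Ca / b * (y4 + 3 * y2 ^ 2) / μB ^ 4) / (M : ℝ) ^ 2 := by ring
  rw [efin]
  linarith [tri, e1.le, e2, e3]

end RatioAux
open RatioAux in
/-- For an i.i.d. sequence of pairs of positive bounded random variables with `B`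
bounded away from zero and `cov(A,B)/var(B) < E[A]/E[B]`, the expansion
`E[Z_M] = E[A]/E[B] + M⁻¹ E[B]⁻² ((E[A]/E[B])·var(B) − cov(A,B)) + O(M⁻²)` holds for
`Z_M = (∑_{i<M} A_i)/(∑_{i<M} B_i)`, and the first-order coefficient is nonnegative. -/
theorem ratio_of_sums_expansion {Ω : Type*} [MeasureSpace Ω]
    [IsProbabilityMeasure (volume : Measure Ω)]
    (A B : ℕ → Ω → ℝ)
    (hmeas : ∀ i, Measurable (fun ω => (A i ω, B i ω)))
    (hindep : ProbabilityTheory.iIndepFun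
      (fun i ω => (A i ω, B i ω)) volume)
    (hident : ∀ i, ProbabilityTheory.IdentDistrib
      (fun ω => (A i ω, B i ω)) (fun ω => (A 0 ω, B 0 ω)) volume volume)
    (Ca : ℝ) (hAbd : ∀ i ω, 0 < A i ω ∧ A i ω ≤ Ca)
    (b Cb : ℝ) (hb : 0 < b) (hBbd : ∀ i ω, b ≤ B i ω ∧ B i ω ≤ Cb)
    (hstrict : ((∫ ω, A 0 ω * B 0 ω) - (∫ ω, A 0 ω) * ∫ ω, B 0 ω) /
        ((∫ ω, (B 0 ω) ^ 2) - (∫ ω, B 0 ω) ^ 2)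
      < (∫ ω, A 0 ω) / ∫ ω, B 0 ω) :
    0 ≤ ((∫ ω, A 0 ω) / ∫ ω, B 0 ω) * ((∫ ω, (B 0 ω) ^ 2) - (∫ ω, B 0 ω) ^ 2)
        - ((∫ ω, A 0 ω * B 0 ω) - (∫ ω, A 0 ω) * ∫ ω, B 0 ω) ∧
    (fun M : ℕ =>
        (∫ ω, (∑ i ∈ Finset.range M, A i ω) / (∑ i ∈ Finset.range M, B i ω))
        - ((∫ ω, A 0 ω) / ∫ ω, B 0 ω)
        - (M : ℝ)⁻¹ * ((∫ ω, B 0 ω) ^ 2)⁻¹ *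
            (((∫ ω, A 0 ω) / ∫ ω, B 0 ω) * ((∫ ω, (B 0 ω) ^ 2) - (∫ ω, B 0 ω) ^ 2)
              - ((∫ ω, A 0 ω * B 0 ω) - (∫ ω, A 0 ω) * ∫ ω, B 0 ω)))
      =O[atTop] fun M : ℕ => ((M : ℝ) ^ 2)⁻¹ := by
  -- nonemptiness and sign of Ca
  have hne : Nonempty Ω := by
    by_contra h
    have h0 : (volume : Measure Ω) Set.univ = 0 := by
      rw [Set.univ_eq_empty_iff.mpr (not_nonempty_iff.1 h)]
      exact measure_empty
    rw [measure_univ] at h0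
    exact one_ne_zero h0
  obtain ⟨ω₀⟩ := hne
  have hCa0 : (0 : ℝ) ≤ Ca := le_trans (hAbd 0 ω₀).1.le (hAbd 0 ω₀).2
  -- boundedness of the variables
  have hbA : ∀ i, Bdd (A i) := by
    intro i
    refine ⟨(measurable_fst.comp (hmeas i) : Measurable fun ω => A i ω), Ca, fun ω => ?_⟩
    have h1 := (hAbd i ω).1
    have h2 := (hAbd i ω).2
    rw [abs_le]; constructor <;> linarith
  have hbB : ∀ i, Bdd (B i) := by
    intro i
    refine ⟨(measurable_snd.comp (hmeas i) : Measurable fun ω => B i ω), Cb, fun ω => ?_⟩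
    have h1 := (hBbd i ω).1
    have h2 := (hBbd i ω).2
    rw [abs_le]; constructor <;> linarith
  set μA := ∫ ω, A 0 ω with hμAdef
  set μB := ∫ ω, B 0 ω with hμBdef
  have hcA : (∫ ω, ctr A μA 0 ω) = 0 := by
    have : ∫ ω, ctr A μA 0 ω = (∫ ω, A 0 ω) - ∫ _ω : Ω, μA := by
      simp only [ctr]
      exact integral_sub (hbA 0).integrable (integrable_const μA)
    rw [this, integral_const]
    simp
    exact sub_self _
  have hcB : (∫ ω, ctr B μB 0 ω) = 0 := by
    have : ∫ ω, ctr B μB 0 ω = (∫ ω, B 0 ω) - ∫ _ω : Ω, μB := by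
      simp only [ctr]
      exact integral_sub (hbB 0).integrable (integrable_const μB)
    rw [this, integral_const]
    simp
    exact sub_self _
  have hμB : 0 < μB := by
    have hble : b ≤ μB := by
      have h1 : ∫ (_ω : Ω), b = b := by simp
      rw [hμBdef, ← h1]
      exact integral_mono (integrable_const b) (hbB 0).integrable fun ω => (hBbd 0 ω).1
    linarith
  -- identities relating the statement's quantities to central moments
  have hq02e : (∫ ω, (B 0 ω) ^ 2) - μB ^ 2 = ∫ ω, ctr B μB 0 ω ^ 2 := by
    have e : ∀ ω, ctr B μB 0 ω ^ 2 = B 0 ω ^ 2 + (-(2 * μB)) * B 0 ω + μB ^ 2 := by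
      intro ω; simp only [ctr]; ring
    rw [show (∫ ω, ctr B μB 0 ω ^ 2)
        = ∫ ω, (B 0 ω ^ 2 + (-(2 * μB)) * B 0 ω + μB ^ 2) from by simp only [e]]
    rw [iadd3 ((hbB 0).pow 2) (Bdd.smul _ (hbB 0)) (Bdd.const _), integral_const_mul,
      integral_const]
    simp only [measure_univ, probReal_univ, smul_eq_mul, one_mul]
    rw [← hμBdef]
    ring
  have hq11e : (∫ ω, A 0 ω * B 0 ω) - μA * μB = ∫ ω, ctr A μA 0 ω * ctr B μB 0 ω := by
    have e : ∀ ω, ctr A μA 0 ω * ctr B μB 0 ω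
        = A 0 ω * B 0 ω + (-μA) * B 0 ω + (-μB) * A 0 ω + μA * μB := by
      intro ω; simp only [ctr]; ring
    rw [show (∫ ω, ctr A μA 0 ω * ctr B μB 0 ω)
        = ∫ ω, (A 0 ω * B 0 ω + (-μA) * B 0 ω + (-μB) * A 0 ω + μA * μB) from by simp only [e]]
    rw [iadd4 ((hbA 0).mul (hbB 0)) (Bdd.smul _ (hbB 0)) (Bdd.smul _ (hbA 0)) (Bdd.const _),
      integral_const_mul, integral_const_mul, integral_const]
    simp only [measure_univ, probReal_univ, smul_eq_mul, one_mul]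
    rw [← hμAdef, ← hμBdef]
    ring
  rw [hq02e, hq11e] at hstrict
  simp only [hq02e, hq11e]
  have hq02nn : 0 ≤ ∫ ω, ctr B μB 0 ω ^ 2 := integral_nonneg fun ω => by positivity
  constructor
  · -- nonnegativity of the first-order coefficient
    rcases eq_or_lt_of_le hq02nn with heq | hlt
    · have hae : (fun ω => ctr B μB 0 ω ^ 2) =ᵐ[volume] 0 := by
        rw [← integral_eq_zero_iff_of_nonneg (fun ω => by positivity)
          ((Bdd.ctr hbB 0).pow 2).integrable]
        exact heq.symm
      have hae' : ∀ᵐ ω ∂(volume : Measure Ω), ctr B μB 0 ω = 0 := by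
        filter_upwards [hae] with ω h
        exact (pow_eq_zero_iff two_ne_zero).mp h
      have hq11z : (∫ ω, ctr A μA 0 ω * ctr B μB 0 ω) = 0 := by
        rw [show (0 : ℝ) = ∫ (_ω : Ω), (0:ℝ) from by simp]
        apply integral_congr_ae
        filter_upwards [hae'] with ω h
        rw [h, mul_zero]
      rw [hq11z, ← heq]
      simp
    · have := (div_lt_iff₀ hlt).mp hstrict
      nlinarith
  · -- the big-O estimate
    apply Asymptotics.IsBigO.of_bound
      (|∫ ω, ctr A μA 0 ω * ctr B μB 0 ω ^ 2| / μB ^ 3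
        + (|∫ ω, ctr A μA 0 ω * ctr B μB 0 ω ^ 3|
          + 3 * |∫ ω, ctr A μA 0 ω * ctr B μB 0 ω| * |∫ ω, ctr B μB 0 ω ^ 2|
          + |μA| * |∫ ω, ctr B μB 0 ω ^ 3|
          + Ca / b * ((∫ ω, ctr B μB 0 ω ^ 4) + 3 * (∫ ω, ctr B μB 0 ω ^ 2) ^ 2)) / μB ^ 4)
    filter_upwards [Filter.eventually_ge_atTop 1] with M hM
    have hN0 : (0:ℝ) < (M:ℝ) := by exact_mod_cast lt_of_lt_of_le one_pos hM
    have h := main_est A B hmeas hindep hident μA μB hbA hbB hcA hcB Ca b hb hCa0 hAbd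
      (fun i ω => (hBbd i ω).1) hμB M hM
    rw [Real.norm_eq_abs, Real.norm_eq_abs,
      abs_of_nonneg (by positivity : (0:ℝ) ≤ (((M:ℝ) ^ 2)⁻¹)), ← div_eq_mul_inv]
    exact h
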